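/- Let K be a differential field with derivation D and subfield of constants C. Let q, m ≥ 1, let f_1, …, f_m ∈ K^q be linearly independent over C, and let g_1, …, g_m ∈ K. If Σ_{α=1}^m g_α · D^j(f_α) = 0 in K^q for every integer j ≥ 0, then g_1 = g_2 = … = g_m = 0. -/

import Mathlib

/-- Let `K` be a differential field with derivation `D` and subfield of
constants `C`. Let `q, m ≥ 1`, let `f_1, …, f_m ∈ K^q` be linearly independent over the
constants, and let `g_1, …, g_m ∈ K`. If `Σ_α g_α · D^j(f_α) = 0` in `K^q` for every
`j ≥ 0`, then `g_1 = … = g_m = 0`. -/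
theorem stmt_1 {K : Type*} [Field K] (D : K → K)
    (hadd : ∀ a b : K, D (a + b) = D a + D b)
    (hleib : ∀ a b : K, D (a * b) = a * D b + b * D a)
    (q m : ℕ) (hq : 1 ≤ q) (hm : 1 ≤ m)
    (f : Fin m → Fin q → K) (g : Fin m → K)
    (hindep : ∀ c : Fin m → K, (∀ α, D (c α) = 0) →
      (∑ α, c α • f α) = 0 → ∀ α, c α = 0)
    (h : ∀ (j : ℕ) (d : Fin q), ∑ α, g α * D^[j] (f α d) = 0) :
    ∀ α, g α = 0 := by
  classical
  have hD0 : D 0 = 0 := by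
    have h0 := hadd 0 0
    rw [add_zero] at h0
    exact (left_eq_add.mp h0)
  have hD1 : D 1 = 0 := by
    have h0 := hleib 1 1
    simp only [mul_one, one_mul] at h0
    exact (left_eq_add.mp h0)
  set Dh : K →+ K := AddMonoidHom.mk' D hadd with hDh
  have hDhD : ∀ a : K, Dh a = D a := fun a => rfl
  have main : ∀ n : ℕ, ∀ g : Fin m → K,
      (Finset.univ.filter fun α => g α ≠ 0).card ≤ n →
      (∀ (j : ℕ) (d : Fin q), ∑ α, g α * D^[j] (f α d) = 0) →
      ∀ α, g α = 0 := by
    intro n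
    induction n with
    | zero =>
      intro g hcard _ α
      by_contra hα
      have hmem : α ∈ Finset.univ.filter fun α => g α ≠ 0 := by
        simp [hα]
      have := Finset.card_pos.mpr ⟨α, hmem⟩
      omega
    | succ n ih =>
      intro g hcard hg α
      by_cases hall : ∀ β, g β = 0
      · exact hall α
      push_neg at hall
      obtain ⟨β, hβ⟩ := hall
      exfalso
      set G : Fin m → K := fun α' => g α' * (g β)⁻¹ with hGdef
      have hGj : ∀ (j : ℕ) (d : Fin q), ∑ α', G α' * D^[j] (f α' d) = 0 := by
        intro j d
        have e : ∑ α', G α' * D^[j] (f α' d)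
            = (g β)⁻¹ * ∑ α', g α' * D^[j] (f α' d) := by
          rw [Finset.mul_sum]
          apply Finset.sum_congr rfl
          intro x _; simp [hGdef]; ring
        rw [e, hg j d, mul_zero]
      have hGβ : G β = 1 := mul_inv_cancel₀ hβ
      have hHj : ∀ (j : ℕ) (d : Fin q), ∑ α', D (G α') * D^[j] (f α' d) = 0 := by
        intro j d
        have e1 : D (∑ α', G α' * D^[j] (f α' d)) = 0 := by
          rw [hGj j d]; exact hD0
        have e2 : D (∑ α', G α' * D^[j] (f α' d))
            = ∑ α', (G α' * D^[j+1] (f α' d) + D^[j] (f α' d) * D (G α')) := by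
          rw [← hDhD, map_sum]
          apply Finset.sum_congr rfl
          intro x _
          rw [hDhD, hleib, Function.iterate_succ_apply']
        rw [e2, Finset.sum_add_distrib, hGj (j+1) d, zero_add] at e1
        rw [← e1]
        apply Finset.sum_congr rfl
        intro x _; ring
      have hsub : (Finset.univ.filter fun α' => D (G α') ≠ 0)
          ⊆ (Finset.univ.filter fun α' => g α' ≠ 0).erase β := by
        intro x hx
        simp only [Finset.mem_filter, Finset.mem_univ, true_and] at hx
        rw [Finset.mem_erase]
        constructor
        · rintro rfl
          rw [hGβ] at hx
          exact hx hD1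
        · simp only [Finset.mem_filter, Finset.mem_univ, true_and]
          intro hgx
          apply hx
          have : G x = 0 := by simp [hGdef, hgx]
          rw [this]; exact hD0
      have hβmem : β ∈ Finset.univ.filter fun α' => g α' ≠ 0 := by simp [hβ]
      have hcard' : (Finset.univ.filter fun α' => D (G α') ≠ 0).card ≤ n := by
        have h1 := Finset.card_le_card hsub
        have h2 := Finset.card_erase_lt_of_mem hβmem
        omega
      have hconst : ∀ α', D (G α') = 0 := ih (fun α' => D (G α')) hcard' hHj
      have hsum0 : (∑ α', G α' • f α') = 0 := by
        funext d
        have := hGj 0 d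
        simpa [Finset.sum_apply, Function.iterate_zero] using this
      have := hindep G hconst hsum0 β
      rw [hGβ] at this
      exact one_ne_zero this
  exact main _ g le_rfl h
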